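/- If C is an abelian category, then the set-decorated category C◁Set is abelian. -/

import Mathlib

open CategoryTheory Limits

universe v u

/-- An object of the set-decorated category `C ◁ Set`: a triple `(c, S, f)` with `c` an
object of `C`, `S` a set, and `f : S → End c`, encoded as a function `ZFSet → End c`
vanishing outside `S` (the paper's convention that `f` evaluates to `0` outside `S`). -/
structure DecObj (C : Type u) [Category.{v} C] [Preadditive C] : Type (max u v 2) where
  c : C
  S : ZFSet.{0}
  f : ZFSet.{0} → (c ⟶ c)
  hf : ∀ s : ZFSet.{0}, s ∉ S → f s = 0

namespace DecObj

variable {C : Type u} [Category.{v} C] [Preadditive C]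

/-- `ψ : c ⟶ c'` intertwines the decorations of `X` and `Y`; by the vanishing-outside-`S`
convention this is exactly the three-case condition of the paper. -/
def Intertwines (X Y : DecObj C) (ψ : X.c ⟶ Y.c) : Prop :=
  ∀ s : ZFSet.{0}, X.f s ≫ ψ = ψ ≫ Y.f s

/-- Morphisms in `C ◁ Set`. -/
@[ext]
structure Hom (X Y : DecObj C) where
  ψ : X.c ⟶ Y.c
  comm : Intertwines X Y ψ

instance : Category (DecObj C) where
  Hom := Hom
  id X := ⟨𝟙 X.c, fun s => by simp [Intertwines]⟩
  comp g h := ⟨g.ψ ≫ h.ψ, fun s => by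
    rw [← Category.assoc, g.comm s, Category.assoc, h.comm s, Category.assoc]⟩

@[simp] theorem id_ψ (X : DecObj C) : Hom.ψ (𝟙 X) = 𝟙 X.c := rfl

@[simp] theorem comp_ψ {X Y Z : DecObj C} (g : X ⟶ Y) (h : Y ⟶ Z) :
    (g ≫ h).ψ = g.ψ ≫ h.ψ := rfl

/-- The forgetful functor `U : C ◁ Set ⥤ C`. -/
def forgetDec (C : Type u) [Category.{v} C] [Preadditive C] : DecObj C ⥤ C where
  obj X := X.c
  map g := g.ψ

-- Preadditive structure
instance (X Y : DecObj C) : Zero (X ⟶ Y) := ⟨⟨0, fun s => by simp [Intertwines]⟩⟩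
instance (X Y : DecObj C) : Add (X ⟶ Y) :=
  ⟨fun g h => ⟨g.ψ + h.ψ, fun s => by
    simp [Preadditive.comp_add, Preadditive.add_comp, g.comm s, h.comm s]⟩⟩
instance (X Y : DecObj C) : Neg (X ⟶ Y) := ⟨fun g => ⟨-g.ψ, fun s => by simp [g.comm s]⟩⟩

instance homAddCommGroup (X Y : DecObj C) : AddCommGroup (X ⟶ Y) where
  add_assoc a b c := by apply Hom.ext; exact add_assoc _ _ _
  zero_add a := by apply Hom.ext; exact zero_add _
  add_zero a := by apply Hom.ext; exact add_zero _
  add_comm a b := by apply Hom.ext; exact add_comm _ _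
  neg_add_cancel a := by apply Hom.ext; exact neg_add_cancel _
  nsmul := nsmulRec
  zsmul := zsmulRec

@[simp] theorem zero_ψ {X Y : DecObj C} : Hom.ψ (0 : X ⟶ Y) = 0 := rfl
@[simp] theorem add_ψ {X Y : DecObj C} (g h : X ⟶ Y) : Hom.ψ (g + h) = g.ψ + h.ψ := rfl

instance : Preadditive (DecObj C) where
  add_comp _ _ _ f g h := by apply Hom.ext; simp [Preadditive.add_comp]
  comp_add _ _ _ f g h := by apply Hom.ext; simp [Preadditive.comp_add]

end DecObj

namespace DecObj
open ZeroObject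

variable {C : Type u} [Category.{v} C] [Abelian C]

-- Zero object
instance : HasZeroObject (DecObj C) := by
  refine ⟨⟨⟨(0 : C), ∅, 0, fun s _ => rfl⟩, ?_⟩⟩
  rw [IsZero.iff_id_eq_zero]
  apply Hom.ext
  exact (Limits.isZero_zero C).eq_of_src _ _

-- Binary biproducts
@[reducible] noncomputable def biprodObj (X Y : DecObj C) : DecObj C where
  c := X.c ⊞ Y.c
  S := X.S ∪ Y.S
  f s := biprod.map (X.f s) (Y.f s)
  hf s hs := by
    rw [ZFSet.mem_union] at hs
    push_neg at hs
    rw [X.hf s hs.1, Y.hf s hs.2]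
    ext <;> simp

noncomputable def biprodBicone (X Y : DecObj C) : BinaryBicone X Y where
  pt := biprodObj X Y
  fst := ⟨biprod.fst, fun s => by simp [biprodObj]⟩
  snd := ⟨biprod.snd, fun s => by simp [biprodObj]⟩
  inl := ⟨biprod.inl, fun s => by simp [biprodObj]⟩
  inr := ⟨biprod.inr, fun s => by simp [biprodObj]⟩
  inl_fst := by apply Hom.ext; simp
  inl_snd := by apply Hom.ext; simp
  inr_fst := by apply Hom.ext; simp
  inr_snd := by apply Hom.ext; simp

noncomputable instance : HasBinaryBiproducts (DecObj C) :=
  ⟨fun X Y => hasBinaryBiproduct_of_total (biprodBicone X Y) (by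
        apply Hom.ext
        exact biprod.total)⟩

instance : HasFiniteProducts (DecObj C) :=
  hasFiniteProducts_of_has_binary_and_terminal

-- Kernels
@[reducible] noncomputable def kerObj {X Y : DecObj C} (g : X ⟶ Y) : DecObj C where
  c := kernel g.ψ
  S := X.S
  f s := kernel.lift g.ψ (kernel.ι g.ψ ≫ X.f s) (by
    rw [Category.assoc, g.comm s, ← Category.assoc, kernel.condition, zero_comp])
  hf s hs := by
    apply (cancel_mono (kernel.ι g.ψ)).1
    rw [kernel.lift_ι, X.hf s hs]
    simp

noncomputable def kerι {X Y : DecObj C} (g : X ⟶ Y) : kerObj g ⟶ X :=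
  ⟨kernel.ι g.ψ, fun s => by simp [kerObj]⟩

theorem kerι_comp {X Y : DecObj C} (g : X ⟶ Y) : kerι g ≫ g = 0 := by
  apply Hom.ext; simp [kerι]

noncomputable def kerIsLimit {X Y : DecObj C} (g : X ⟶ Y) :
    IsLimit (KernelFork.ofι (kerι g) (kerι_comp g)) := by
  have hmono : Mono (kernel.ι g.ψ) := inferInstance
  refine KernelFork.IsLimit.ofι _ _
    (fun {W} t ht => ⟨kernel.lift g.ψ t.ψ (by
      have := congrArg Hom.ψ ht; simpa using this), fun s => ?_⟩)
    (fun {W} t ht => by apply Hom.ext; simp [kerι])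
    (fun {W} t ht m hm => ?_)
  · apply (cancel_mono (kernel.ι g.ψ)).1
    have h1 : (kerObj g).f s ≫ kernel.ι g.ψ = kernel.ι g.ψ ≫ X.f s := by
      simp [kerObj]
    simp only [Category.assoc, h1, kernel.lift_ι, kernel.lift_ι_assoc]
    exact t.comm s
  · apply Hom.ext
    apply (cancel_mono (kernel.ι g.ψ)).1
    have := congrArg Hom.ψ hm
    simp only [comp_ψ] at this
    simp [kerι] at this ⊢
    exact this

noncomputable instance : HasKernels (DecObj C) :=
  ⟨fun g => HasLimit.mk ⟨_, kerIsLimit g⟩⟩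

-- Cokernels
@[reducible] noncomputable def cokerObj {X Y : DecObj C} (g : X ⟶ Y) : DecObj C where
  c := cokernel g.ψ
  S := Y.S
  f s := cokernel.desc g.ψ (Y.f s ≫ cokernel.π g.ψ) (by
    rw [← Category.assoc, ← g.comm s, Category.assoc, cokernel.condition, comp_zero])
  hf s hs := by
    apply (cancel_epi (cokernel.π g.ψ)).1
    rw [cokernel.π_desc, Y.hf s hs]
    simp

noncomputable def cokerπ {X Y : DecObj C} (g : X ⟶ Y) : Y ⟶ cokerObj g :=
  ⟨cokernel.π g.ψ, fun s => by simp [cokerObj]⟩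

theorem comp_cokerπ {X Y : DecObj C} (g : X ⟶ Y) : g ≫ cokerπ g = 0 := by
  apply Hom.ext; simp [cokerπ]

theorem hom_ψ_comp_zero {X Y W : DecObj C} {g : X ⟶ Y} {t : Y ⟶ W} (ht : g ≫ t = 0) :
    g.ψ ≫ t.ψ = 0 := by
  have := congrArg Hom.ψ ht; simpa using this

noncomputable def cokerDesc {X Y : DecObj C} (g : X ⟶ Y) {W : DecObj C} (t : Y ⟶ W)
    (ht : g ≫ t = 0) : cokerObj g ⟶ W := by
  refine ⟨cokernel.desc g.ψ t.ψ (hom_ψ_comp_zero ht), fun s => ?_⟩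
  apply (cancel_epi (cokernel.π g.ψ)).1
  have h1 : cokernel.π g.ψ ≫ (cokerObj g).f s = Y.f s ≫ cokernel.π g.ψ := by
    simp [cokerObj]
  have h2 : cokernel.π g.ψ ≫ (cokerObj g).f s ≫ cokernel.desc g.ψ t.ψ (hom_ψ_comp_zero ht) =
      Y.f s ≫ t.ψ := by
    rw [← Category.assoc, h1, Category.assoc, cokernel.π_desc]
  have h3 : cokernel.π g.ψ ≫ cokernel.desc g.ψ t.ψ (hom_ψ_comp_zero ht) ≫ W.f s =
      t.ψ ≫ W.f s := by
    rw [← Category.assoc, cokernel.π_desc]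
  rw [h2, h3]
  exact t.comm s

noncomputable def cokerIsColimit {X Y : DecObj C} (g : X ⟶ Y) :
    IsColimit (CokernelCofork.ofπ (cokerπ g) (comp_cokerπ g)) := by
  refine CokernelCofork.IsColimit.ofπ _ _
    (fun {W} t ht => cokerDesc g t ht)
    (fun {W} t ht => by apply Hom.ext; simp [cokerπ, cokerDesc])
    (fun {W} t ht m hm => ?_)
  apply Hom.ext
  apply (cancel_epi (cokernel.π g.ψ)).1
  have := congrArg Hom.ψ hm
  simp only [comp_ψ] at this
  simp [cokerπ, cokerDesc] at this ⊢
  exact this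

noncomputable instance : HasCokernels (DecObj C) :=
  ⟨fun g => HasColimit.mk ⟨_, cokerIsColimit g⟩⟩

-- Forgetful reflects mono/epi via (co)kernels
theorem mono_ψ {X Y : DecObj C} (g : X ⟶ Y) [Mono g] : Mono g.ψ := by
  have h0 : kerι g = 0 := by
    apply (cancel_mono g).1
    rw [kerι_comp g, zero_comp]
  apply Preadditive.mono_of_kernel_zero (f := g.ψ)
  have := congrArg Hom.ψ h0
  simpa [kerι] using this

theorem epi_ψ {X Y : DecObj C} (g : X ⟶ Y) [Epi g] : Epi g.ψ := by
  have h0 : cokerπ g = 0 := by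
    apply (cancel_epi g).1
    rw [comp_cokerπ g, comp_zero]
  apply Preadditive.epi_of_cokernel_zero (f := g.ψ)
  have := congrArg Hom.ψ h0
  simpa [cokerπ] using this

noncomputable instance : IsNormalMonoCategory (DecObj C) where
  normalMonoOfMono := fun {X Y} g hg => by
    refine Nonempty.intro ?_
    have hm : Mono g.ψ := mono_ψ g
    have L := Abelian.monoIsKernelOfCokernel
      (CokernelCofork.ofπ (cokernel.π g.ψ) (cokernel.condition g.ψ))
      (cokernelIsCokernel g.ψ)
    refine { Z := cokerObj g, g := cokerπ g, w := comp_cokerπ g, isLimit := ?_ }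
    refine KernelFork.IsLimit.ofι' _ _ (fun {W} t ht => ?_)
    have htψ : t.ψ ≫ cokernel.π g.ψ = 0 := by
      have := congrArg Hom.ψ ht; simpa [cokerπ] using this
    obtain ⟨l, hl⟩ := KernelFork.IsLimit.lift' L t.ψ htψ
    simp only [Fork.ι_ofι] at hl
    refine ⟨⟨l, fun s => ?_⟩, ?_⟩
    · apply (cancel_mono g.ψ).1
      calc (W.f s ≫ l) ≫ g.ψ = W.f s ≫ t.ψ := by rw [Category.assoc, hl]
        _ = t.ψ ≫ Y.f s := t.comm s
        _ = (l ≫ g.ψ) ≫ Y.f s := by rw [hl]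
        _ = l ≫ X.f s ≫ g.ψ := by rw [Category.assoc, ← g.comm s]
        _ = (l ≫ X.f s) ≫ g.ψ := by rw [Category.assoc]
    · apply Hom.ext
      exact hl

noncomputable instance : IsNormalEpiCategory (DecObj C) where
  normalEpiOfEpi := fun {X Y} g hg => by
    refine Nonempty.intro ?_
    have hm : Epi g.ψ := epi_ψ g
    have L := Abelian.epiIsCokernelOfKernel
      (KernelFork.ofι (kernel.ι g.ψ) (kernel.condition g.ψ))
      (kernelIsKernel g.ψ)
    refine { W := kerObj g, g := kerι g, w := kerι_comp g, isColimit := ?_ }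
    refine CokernelCofork.IsColimit.ofπ' _ _ (fun {W} t ht => ?_)
    have htψ : kernel.ι g.ψ ≫ t.ψ = 0 := by
      have := congrArg Hom.ψ ht; simpa [kerι] using this
    obtain ⟨l, hl⟩ := CokernelCofork.IsColimit.desc' L t.ψ htψ
    simp only [Cofork.π_ofπ] at hl
    refine ⟨⟨l, fun s => ?_⟩, ?_⟩
    · apply (cancel_epi g.ψ).1
      calc g.ψ ≫ Y.f s ≫ l = (g.ψ ≫ Y.f s) ≫ l := by rw [Category.assoc]
        _ = (X.f s ≫ g.ψ) ≫ l := by rw [g.comm s]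
        _ = X.f s ≫ t.ψ := by rw [Category.assoc, hl]
        _ = t.ψ ≫ W.f s := t.comm s
        _ = (g.ψ ≫ l) ≫ W.f s := by rw [hl]
        _ = g.ψ ≫ l ≫ W.f s := by rw [Category.assoc]
    · apply Hom.ext
      exact hl

end DecObj

/-- if `C` is abelian then the set-decorated category `C ◁ Set` is abelian. -/
theorem decoration_abelian (C : Type u) [Category.{v} C] [Abelian C] :
    Nonempty (Abelian (DecObj C)) := by
  exact ⟨{ normalMonoOfMono := fun f _ => IsNormalMonoCategory.normalMonoOfMono f
           normalEpiOfEpi := fun f _ => IsNormalEpiCategory.normalEpiOfEpi f }⟩
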